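/- Toy Example 1, hypocritical risk of the Bayes optimal classifier equals 1: for the Bayes classifier h of Toy Example 1 (predicting −1 on [2kε,(2k+1)ε) and +1 on ((2k+1)ε,(2k+2)ε]) under the ℓ∞/absolute-value threat model with radius ε, every example (x, y) with x in the interior of [0,1] can be perturbed within distance ε to a point classified as y, hence R_hyp(h, D) = 1 (and also R_adv(h, D) = 1). -/

import Mathlib

open MeasureTheory ProbabilityTheory Classical

/-- First-type intervals `[2kε, (2k+1)ε)` for `ε = 1/(2n)`, where `η = 1/4`. -/
def firstType (n : ℕ) (x : ℝ) : Prop :=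
  ∃ k : ℕ, k < n ∧ x ∈ Set.Ico ((2 * k) * (1 / (2 * n)) : ℝ) ((2 * k + 1) * (1 / (2 * n)))

/-- Toy distribution on `ℝ × {−1, +1} ⊆ ℝ × ℤ`: `x` is uniform on `[0,1]`, with
`P(y = +1 ∣ x) = 1/4` on first-type intervals and `P(y = +1 ∣ x) = 1` elsewhere
(in particular on the second-type intervals `((2k+1)ε, (2k+2)ε]`). -/
noncomputable def toyD (n : ℕ) : Measure (ℝ × ℤ) :=
  (volume.restrict (Set.Icc (0 : ℝ) 1)).bind fun x =>
    if firstType n x then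
      ENNReal.ofReal (1 / 4) • Measure.dirac (x, 1)
        + ENNReal.ofReal (3 / 4) • Measure.dirac (x, -1)
    else Measure.dirac (x, 1)

/- ### Auxiliary lemmas -/

lemma toy_interval_decomp (n : ℕ) (hn : 0 < n) (x : ℝ) (hx0 : 0 ≤ x) (hx1 : x < 1) :
    ∃ m : ℕ, m < 2 * n ∧ (m : ℝ) * (1 / (2 * n)) ≤ x ∧ x < (m + 1) * (1 / (2 * n)) := by
  set ε : ℝ := 1 / (2 * n) with hε
  have hεpos : 0 < ε := by positivity
  refine ⟨⌊x / ε⌋₊, ?_, ?_, ?_⟩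
  · rw [Nat.floor_lt (by positivity)]
    rw [div_lt_iff₀ hεpos]
    push_cast
    rw [hε]
    field_simp
    linarith
  · have := Nat.floor_le (show (0:ℝ) ≤ x / ε by positivity)
    calc (⌊x / ε⌋₊ : ℝ) * ε ≤ (x / ε) * ε := by nlinarith
      _ = x := by field_simp
  · have := Nat.lt_floor_add_one (x / ε)
    have h2 : x / ε * ε < ((⌊x / ε⌋₊ : ℝ) + 1) * ε := by nlinarith
    calc x = x / ε * ε := by field_simp
      _ < _ := h2

lemma toy_not_firstType_of_odd (n : ℕ) (hn : 0 < n) (k : ℕ) (x : ℝ)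
    (h1 : (2 * k + 1 : ℝ) * (1 / (2 * n)) ≤ x) (h2 : x < (2 * k + 2 : ℝ) * (1 / (2 * n))) :
    ¬ firstType n x := by
  rintro ⟨j, hj, hj1, hj2⟩
  have hεpos : (0:ℝ) < 1 / (2 * n) := by positivity
  have a1 : (2 * (j:ℝ)) < 2 * k + 2 := lt_of_mul_lt_mul_right (lt_of_le_of_lt hj1 h2) hεpos.le
  have a2 : (2 * (k:ℝ) + 1) < 2 * j + 1 := lt_of_mul_lt_mul_right (lt_of_le_of_lt h1 hj2) hεpos.le
  have b1 : (j:ℝ) < k + 1 := by linarith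
  have b2 : (k:ℝ) < j := by linarith
  have hjk : j < k + 1 := by exact_mod_cast b1
  have hkj : k < j := by exact_mod_cast b2
  omega

lemma toy_exists_points (n : ℕ) (hn : 0 < n) (x : ℝ) (hx0 : 0 ≤ x) (hx1 : x < 1) :
    (∃ x' : ℝ, |x' - x| ≤ 1 / (2 * n) ∧ firstType n x') ∧
    (∃ x' : ℝ, |x' - x| ≤ 1 / (2 * n) ∧ ¬ firstType n x') := by
  obtain ⟨m, hm, hml, hmr⟩ := toy_interval_decomp n hn x hx0 hx1
  set ε : ℝ := 1 / (2 * n) with hε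
  have hεpos : 0 < ε := by positivity
  rcases Nat.even_or_odd m with ⟨k, hk⟩ | ⟨k, hk⟩
  · subst hk
    constructor
    · refine ⟨x, by simp [abs_of_nonneg, hεpos.le], k, by omega, ?_, ?_⟩
      · push_cast at hml ⊢; nlinarith
      · push_cast at hmr ⊢; nlinarith
    · refine ⟨x + ε, by simp [abs_of_nonneg, hεpos.le], ?_⟩
      apply toy_not_firstType_of_odd n hn k
      · push_cast; push_cast at hml; nlinarith
      · push_cast; push_cast at hmr; nlinarith
  · subst hk
    constructor
    · refine ⟨x - ε, by simp [abs_of_nonpos, hεpos.le], k, by omega, ?_, ?_⟩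
      · push_cast at hml ⊢; nlinarith
      · push_cast at hmr ⊢; nlinarith
    · refine ⟨x, by simp [abs_of_nonneg, hεpos.le], ?_⟩
      apply toy_not_firstType_of_odd n hn k
      · push_cast at hml ⊢; nlinarith
      · push_cast at hmr ⊢; nlinarith

lemma toy_sup_ind_eq_one {s : Set ℝ} {f : ℝ → ℝ} {x0 : ℝ} (hle : ∀ x, f x ≤ 1)
    (hx0 : x0 ∈ s) (hf : f x0 = 1) :
    (⨆ x' ∈ s, f x') = 1 := by
  have hbd : ∀ x' : ℝ, (⨆ _ : x' ∈ s, f x') ≤ 1 := fun x' =>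
    Real.iSup_le (fun _ => hle x') zero_le_one
  apply le_antisymm
  · exact Real.iSup_le hbd zero_le_one
  · have hval : (⨆ _ : x0 ∈ s, f x0) = 1 := by
      rw [ciSup_pos hx0, hf]
    have hBdd : BddAbove (Set.range fun x' : ℝ => ⨆ _ : x' ∈ s, f x') := by
      refine ⟨1, ?_⟩
      rintro _ ⟨x', rfl⟩
      exact hbd x'
    calc (1:ℝ) = _ := hval.symm
      _ ≤ _ := le_ciSup hBdd x0

lemma toy_firstType_measurable (n : ℕ) : MeasurableSet {x : ℝ | firstType n x} := by
  have : {x : ℝ | firstType n x} =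
      ⋃ k : ℕ, ⋃ _ : k < n, Set.Ico ((2 * k) * (1 / (2 * n)) : ℝ) ((2 * k + 1) * (1 / (2 * n))) := by
    ext x; simp only [firstType, Set.mem_setOf_eq, Set.mem_iUnion, Set.mem_Ico]; tauto
  rw [this]
  exact MeasurableSet.iUnion fun k => MeasurableSet.iUnion fun _ => measurableSet_Ico

lemma toy_kappa_measurable (n : ℕ) :
    Measurable (fun x : ℝ =>
      if firstType n x then
        ENNReal.ofReal (1 / 4) • Measure.dirac ((x, 1) : ℝ × ℤ)
          + ENNReal.ofReal (3 / 4) • Measure.dirac (x, -1)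
      else Measure.dirac (x, 1)) := by
  apply Measure.measurable_of_measurable_coe
  intro s hs
  simp only [apply_ite (fun μ : Measure (ℝ × ℤ) => μ s), Measure.coe_add, Measure.coe_smul,
    Pi.add_apply, Pi.smul_apply, smul_eq_mul]
  have hd : ∀ c : ℤ, Measurable fun x : ℝ => Measure.dirac ((x, c) : ℝ × ℤ) s := by
    intro c
    simp only [Measure.dirac_apply' _ hs]
    exact (measurable_one.indicator hs).comp (measurable_id.prodMk measurable_const)
  exact Measurable.ite (toy_firstType_measurable n)
    (((hd 1).const_mul _).add ((hd (-1)).const_mul _)) (hd 1)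

lemma toy_kappa_univ (n : ℕ) (x : ℝ) :
    (if firstType n x then
        ENNReal.ofReal (1 / 4) • Measure.dirac ((x, 1) : ℝ × ℤ)
          + ENNReal.ofReal (3 / 4) • Measure.dirac (x, -1)
      else Measure.dirac (x, 1)) Set.univ = 1 := by
  split
  · simp only [Measure.coe_add, Measure.coe_smul, Pi.add_apply, Pi.smul_apply,
      measure_univ, smul_eq_mul, mul_one]
    rw [← ENNReal.ofReal_add (by norm_num) (by norm_num)]
    norm_num
  · simp

instance toyD_prob (n : ℕ) : IsProbabilityMeasure (toyD n) := by
  constructor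
  rw [toyD, Measure.bind_apply MeasurableSet.univ (toy_kappa_measurable n).aemeasurable]
  simp only [toy_kappa_univ]
  simp [Real.volume_Icc]

lemma toyD_compl_null (n : ℕ) :
    toyD n (Set.Ico (0:ℝ) 1 ×ˢ ({-1, 1} : Set ℤ))ᶜ = 0 := by
  rw [toyD, Measure.bind_apply (measurableSet_Ico.prod (by measurability)).compl
    (toy_kappa_measurable n).aemeasurable]
  rw [Measure.restrict_congr_set (Ico_ae_eq_Icc).symm]
  rw [show (0:ENNReal) = ∫⁻ _ in Set.Ico (0:ℝ) 1, 0 from (lintegral_zero).symm]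
  apply lintegral_congr_ae
  filter_upwards [ae_restrict_mem measurableSet_Ico] with x hx
  have h1 : ((x, 1) : ℝ × ℤ) ∈ Set.Ico (0:ℝ) 1 ×ˢ ({-1, 1} : Set ℤ) := ⟨hx, by simp⟩
  have h2 : ((x, -1) : ℝ × ℤ) ∈ Set.Ico (0:ℝ) 1 ×ˢ ({-1, 1} : Set ℤ) := ⟨hx, by simp⟩
  split
  · simp only [Measure.coe_add, Measure.coe_smul, Pi.add_apply, Pi.smul_apply, smul_eq_mul]
    rw [Measure.dirac_apply, Measure.dirac_apply]
    simp [Set.indicator, h1, h2]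
  · rw [Measure.dirac_apply]
    simp [Set.indicator, h1]

/-- Toy Example 1: for the Bayes optimal classifier, both the hypocritical risk
and the adversarial risk equal `1` under the threat model `|x' − x| ≤ ε` with
`ε = 1/(2n)`. -/
theorem toy_bayes_hyp_and_adv_risk_one (n : ℕ) (hn : 0 < n)
    (h : ℝ → ℤ) (hh : ∀ x, h x = if firstType n x then -1 else 1) :
    (∫ z, (⨆ x' ∈ Metric.closedBall z.1 (1 / (2 * n) : ℝ),
        (if h x' = z.2 then (1 : ℝ) else 0)) ∂(toyD n)) = 1
    ∧ (∫ z, (⨆ x' ∈ Metric.closedBall z.1 (1 / (2 * n) : ℝ),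
        (if h x' ≠ z.2 then (1 : ℝ) else 0)) ∂(toyD n)) = 1 := by
  set good : Set (ℝ × ℤ) := Set.Ico (0:ℝ) 1 ×ˢ ({-1, 1} : Set ℤ) with hgood
  have hmem : good ∈ ae (toyD n) := by
    rw [mem_ae_iff]
    exact toyD_compl_null n
  -- the key pointwise facts on `good`
  have key : ∀ z ∈ good,
      (⨆ x' ∈ Metric.closedBall z.1 (1 / (2 * n) : ℝ),
        (if h x' = z.2 then (1 : ℝ) else 0)) = 1 ∧
      (⨆ x' ∈ Metric.closedBall z.1 (1 / (2 * n) : ℝ),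
        (if h x' ≠ z.2 then (1 : ℝ) else 0)) = 1 := by
    rintro ⟨x, y⟩ ⟨hx, hy⟩
    obtain ⟨⟨x1, hx1d, hx1f⟩, ⟨x2, hx2d, hx2f⟩⟩ := toy_exists_points n hn x hx.1 hx.2
    have hx1b : x1 ∈ Metric.closedBall x (1 / (2 * n) : ℝ) := by
      rw [Metric.mem_closedBall, Real.dist_eq]; exact hx1d
    have hx2b : x2 ∈ Metric.closedBall x (1 / (2 * n) : ℝ) := by
      rw [Metric.mem_closedBall, Real.dist_eq]; exact hx2d
    have hh1 : h x1 = -1 := by rw [hh, if_pos hx1f]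
    have hh2 : h x2 = 1 := by rw [hh, if_neg hx2f]
    rcases hy with hy | hy <;> subst hy
    · exact ⟨toy_sup_ind_eq_one (fun x' => by split <;> norm_num) hx1b
          (if_pos (by simp [hh1])),
        toy_sup_ind_eq_one (fun x' => by split <;> norm_num) hx2b
          (if_pos (by simp [hh2]))⟩
    · exact ⟨toy_sup_ind_eq_one (fun x' => by split <;> norm_num) hx2b
          (if_pos (by simp [hh2])),
        toy_sup_ind_eq_one (fun x' => by split <;> norm_num) hx1b
          (if_pos (by simp [hh1]))⟩
  have hint : ∀ f : ℝ × ℤ → ℝ, (∀ z ∈ good, f z = 1) → (∫ z, f z ∂(toyD n)) = 1 := by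
    intro f hf
    have : f =ᵐ[toyD n] fun _ => 1 := Filter.eventually_of_mem hmem hf
    rw [integral_congr_ae this]
    simp
  exact ⟨hint _ fun z hz => (key z hz).1, hint _ fun z hz => (key z hz).2⟩
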